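/- arXiv:1108.2863 — 3 statements merged into one kernel-verified Lean document; each statement's English description precedes it below -/
import Mathlib

section
/- Let R be a ring such that 2 is not a unit of R. Then the chromatic number of the unit graph of R/J(R) equals the chromatic number of the unit graph of R, i.e., χ(G(R/J(R))) = χ(G(R)). -/
/-- The unit graph of a ring `R`: vertices are elements of `R`, and two distinct
vertices `a` and `b` are adjacent iff `a + b` is a unit of `R`. -/
def unitGraph (R : Type*) [Ring R] : SimpleGraph R where
  Adj a b := a ≠ b ∧ IsUnit (a + b)
  symm := ⟨fun a b ⟨h1, h2⟩ => ⟨h1.symm, add_comm a b ▸ h2⟩⟩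
  loopless := ⟨fun _ ⟨h, _⟩ => h rfl⟩

/-- The clique number of a graph, valued in `ℕ∞` to allow infinite cliques. -/
noncomputable def ecliqueNum {V : Type*} (G : SimpleGraph V) : ℕ∞ :=
  ⨆ s ∈ {s : Set V | G.IsClique s}, s.encard

/-- The independence number of a graph, valued in `ℕ∞`. -/
noncomputable def eindepNum {V : Type*} (G : SimpleGraph V) : ℕ∞ :=
  ⨆ s ∈ {s : Set V | s.Pairwise fun a b => ¬ G.Adj a b}, s.encard

/-- The Jacobson radical of a (not necessarily commutative) ring, as a two-sided ideal:
the intersection of all maximal left ideals. -/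
noncomputable def ringJacobson (R : Type*) [Ring R] : TwoSidedIdeal R :=
  (⊥ : TwoSidedIdeal R).jacobson

/-- The quotient of `R` by its Jacobson radical. -/
abbrev modJacobson (R : Type*) [Ring R] := (ringJacobson R).ringCon.Quotient

section aux

variable {R : Type*} [Ring R]

/-- left+right inverse gives a unit -/
lemma isUnit_of_left_right {a b c : R} (hba : b * a = 1) (hac : a * c = 1) : IsUnit a := by
  have hbc : b = c := by
    calc b = b * (a * c) := by rw [hac, mul_one]
    _ = (b * a) * c := by rw [mul_assoc]
    _ = c := by rw [hba, one_mul]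
  exact ⟨⟨a, b, by rw [hbc]; exact hac, hba⟩, rfl⟩

lemma exists_left_inv_one_add_of_mem_jacobson {x : R}
    (hx : x ∈ Ideal.jacobson (⊥ : Ideal R)) : ∃ z : R, z * (1 + x) = 1 := by
  obtain ⟨z, hz⟩ := Ideal.mem_jacobson_iff.1 hx 1
  rw [Ideal.mem_bot, sub_eq_zero, mul_one] at hz
  exact ⟨z, by rw [mul_add, mul_one, add_comm]; exact hz⟩

lemma isUnit_one_add_of_mem_jacobson {x : R}
    (hx : x ∈ Ideal.jacobson (⊥ : Ideal R)) : IsUnit (1 + x) := by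
  obtain ⟨z, hz⟩ := exists_left_inv_one_add_of_mem_jacobson hx
  have hzmem : -(z * x) ∈ Ideal.jacobson (⊥ : Ideal R) :=
    neg_mem (Ideal.mul_mem_left _ z hx)
  obtain ⟨w, hw⟩ := exists_left_inv_one_add_of_mem_jacobson hzmem
  have hzeq : (1 : R) + -(z * x) = z := by
    have h : z + z * x = 1 := by
      have : z * 1 + z * x = 1 := by rw [← mul_add]; exact hz
      rwa [mul_one] at this
    have h2 := eq_sub_of_add_eq h
    rw [sub_eq_add_neg] at h2
    exact h2.symm
  rw [hzeq] at hw
  exact isUnit_of_left_right hz (by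
    have h1x : (1 + x) = w := by
      calc (1 + x) = (w * z) * (1 + x) := by rw [hw, one_mul]
      _ = w * (z * (1 + x)) := by rw [mul_assoc]
      _ = w := by rw [hz, mul_one]
    rw [h1x]; exact hw)

lemma isUnit_add_of_isUnit_of_mem_jacobson {u j : R} (hu : IsUnit u)
    (hj : j ∈ Ideal.jacobson (⊥ : Ideal R)) : IsUnit (u + j) := by
  obtain ⟨v, rfl⟩ := hu
  have : (v : R) + j = v * (1 + (v⁻¹ : Rˣ) * j) := by
    rw [mul_add, mul_one, ← mul_assoc, Units.mul_inv, one_mul]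
  rw [this]
  exact (Units.isUnit v).mul
    (isUnit_one_add_of_mem_jacobson (Ideal.mul_mem_left _ _ hj))

lemma mem_ringJacobson_iff {x : R} :
    x ∈ ringJacobson R ↔ x ∈ Ideal.jacobson (⊥ : Ideal R) := by
  rw [ringJacobson, TwoSidedIdeal.mem_jacobson_iff, Ideal.mem_jacobson_iff]
  simp [TwoSidedIdeal.mem_bot, Ideal.mem_bot]

/-- The quotient map. -/
noncomputable abbrev jacQuot (R : Type*) [Ring R] : R →+* modJacobson R :=
  (ringJacobson R).ringCon.mk'

lemma jacQuot_surjective : Function.Surjective (jacQuot R) :=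
  fun x => Quot.inductionOn x fun r => ⟨r, rfl⟩

lemma jacQuot_eq_iff {a b : R} : jacQuot R a = jacQuot R b ↔ a - b ∈ ringJacobson R := by
  rw [← TwoSidedIdeal.rel_iff]
  exact RingCon.eq _

lemma isUnit_jacQuot_iff {x : R} : IsUnit (jacQuot R x) ↔ IsUnit x := by
  constructor
  · rintro ⟨u, hu⟩
    obtain ⟨y, hy⟩ := jacQuot_surjective (R := R) (u⁻¹ : (modJacobson R)ˣ)
    have h1 : jacQuot R (x * y) = jacQuot R 1 := by
      rw [map_mul, map_one, ← hu, hy, Units.mul_inv]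
    have h2 : jacQuot R (y * x) = jacQuot R 1 := by
      rw [map_mul, map_one, ← hu, hy, Units.inv_mul]
    rw [jacQuot_eq_iff] at h1 h2
    have hxu : IsUnit (x * y) := by
      have := isUnit_add_of_isUnit_of_mem_jacobson isUnit_one
        (mem_ringJacobson_iff.1 h1)
      rwa [add_sub_cancel] at this
    have hyu : IsUnit (y * x) := by
      have := isUnit_add_of_isUnit_of_mem_jacobson isUnit_one
        (mem_ringJacobson_iff.1 h2)
      rwa [add_sub_cancel] at this
    obtain ⟨c, hc⟩ := hxu.exists_right_inv
    obtain ⟨a, ha⟩ := hyu.exists_left_inv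
    refine isUnit_of_left_right (b := a * y) (c := y * c) ?_ ?_
    · rw [mul_assoc]; exact ha
    · rw [← mul_assoc]; exact hc
  · exact fun h => h.map _

lemma isUnit_two_of_isUnit_two_mul {a : R} (h : IsUnit (2 * a)) : IsUnit (2 : R) := by
  obtain ⟨u, hu⟩ := h
  have hcomm : a * 2 = 2 * a := (mul_two a).trans (two_mul a).symm
  refine isUnit_of_left_right (b := ((u⁻¹ : Rˣ) : R) * a) (c := a * ((u⁻¹ : Rˣ) : R)) ?_ ?_
  · rw [mul_assoc, hcomm, ← hu, Units.inv_mul]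
  · rw [← mul_assoc, ← hu, Units.mul_inv]

end aux

/-- If `2` is not a unit of `R`, then the chromatic number of the unit graph of
`R/J(R)` equals that of `G(R)`. -/
theorem chromaticNumber_unitGraph_modJacobson_eq (R : Type*) [Ring R]
    (h2 : ¬ IsUnit (2 : R)) :
    (unitGraph (modJacobson R)).chromaticNumber = (unitGraph R).chromaticNumber := by
  have π := jacQuot R
  -- hom from G(R) to G(R/J)
  have hom1 : unitGraph R →g unitGraph (modJacobson R) := by
    refine ⟨jacQuot R, ?_⟩
    rintro a b ⟨hab, hu⟩
    refine ⟨?_, ?_⟩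
    · intro h
      rw [jacQuot_eq_iff] at h
      have h2a : IsUnit (2 * a) := by
        have : jacQuot R (a + b) = jacQuot R (2 * a) := by
          rw [jacQuot_eq_iff]
          have : a + b - 2 * a = -(a - b) := by rw [two_mul]; abel
          rw [this]
          exact (ringJacobson R).neg_mem h
        rw [← isUnit_jacQuot_iff, ← this, isUnit_jacQuot_iff]
        exact hu
      exact h2 (isUnit_two_of_isUnit_two_mul h2a)
    · rw [← map_add]
      exact hu.map _
  -- hom from G(R/J) to G(R)
  have hom2 : unitGraph (modJacobson R) →g unitGraph R := by
    refine ⟨Function.surjInv (jacQuot_surjective (R := R)), ?_⟩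
    rintro x y ⟨hxy, hu⟩
    have hx : jacQuot R (Function.surjInv (jacQuot_surjective (R := R)) x) = x :=
      Function.surjInv_eq _ x
    have hy : jacQuot R (Function.surjInv (jacQuot_surjective (R := R)) y) = y :=
      Function.surjInv_eq _ y
    refine ⟨fun h => hxy (by rw [← hx, ← hy, h]), ?_⟩
    rw [← isUnit_jacQuot_iff, map_add, hx, hy]
    exact hu
  apply le_antisymm
  · exact SimpleGraph.chromaticNumber_le_of_forall_imp fun n ⟨C⟩ => ⟨C.comp hom2⟩
  · exact SimpleGraph.chromaticNumber_le_of_forall_imp fun n ⟨C⟩ => ⟨C.comp hom1⟩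
end

section
/- Let R be a ring such that the clique number of the unit graph G(R) is finite and 2 is a unit of R. Then the Jacobson radical J(R) is a nilpotent ideal, i.e., there exists a natural number n with (J(R))^n = 0. -/
section Aux

variable {R : Type*} [Ring R]

/-- Elements of the Jacobson radical have the property that `1 + j` has a left inverse. -/
lemma exists_left_inv_of_mem_ringJacobson {j : R} (hj : j ∈ ringJacobson R) :
    ∃ z, z * (1 + j) = 1 := by
  obtain ⟨z, hz⟩ := (TwoSidedIdeal.mem_jacobson_iff).1 hj 1
  rw [TwoSidedIdeal.mem_bot, sub_eq_zero, mul_one] at hz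
  exact ⟨z, by rw [mul_add, mul_one, add_comm]; exact hz⟩

/-- `1 + j` is a unit for `j` in the Jacobson radical. -/
lemma isUnit_one_add_of_mem_ringJacobson {j : R} (hj : j ∈ ringJacobson R) :
    IsUnit (1 + j) := by
  obtain ⟨z, hz⟩ := exists_left_inv_of_mem_ringJacobson hj
  have hz' : z = 1 + (-(z * j)) := by
    have h1 : z + z * j = 1 := by rw [← hz, mul_add, mul_one]
    rw [← h1]; abel
  obtain ⟨w, hw⟩ := exists_left_inv_of_mem_ringJacobson
    (TwoSidedIdeal.neg_mem _ ((ringJacobson R).mul_mem_left z j hj))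
  rw [← hz'] at hw
  have hwv : w = 1 + j := by
    calc w = w * (z * (1 + j)) := by rw [hz, mul_one]
    _ = (w * z) * (1 + j) := by rw [mul_assoc]
    _ = 1 + j := by rw [hw, one_mul]
  exact ⟨⟨1 + j, z, by rw [← hwv]; exact hw, hz⟩, rfl⟩

/-- The set of products of `k` elements of the Jacobson radical. -/
def jProd (R : Type*) [Ring R] (k : ℕ) : Set R :=
  {x | ∃ f : Fin k → R, (∀ i, f i ∈ ringJacobson R) ∧ (List.ofFn f).prod = x}

/-- The left ideal spanned by products of `k` elements of the Jacobson radical. -/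
def jSpan (R : Type*) [Ring R] (k : ℕ) : Submodule R R :=
  Submodule.span R (jProd R k)

lemma jProd_succ_subset {k : ℕ} {x : R} (hx : x ∈ jProd R (k + 1)) :
    ∃ j ∈ ringJacobson R, ∃ y ∈ jProd R k, x = j * y := by
  obtain ⟨f, hf, rfl⟩ := hx
  refine ⟨f 0, hf 0, (List.ofFn fun i => f i.succ).prod, ⟨fun i => f i.succ, fun i => hf _, rfl⟩, ?_⟩
  rw [List.ofFn_succ, List.prod_cons]

lemma jProd_succ_subset_jacobson {k : ℕ} {x : R} (hx : x ∈ jProd R (k + 1)) :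
    x ∈ ringJacobson R := by
  obtain ⟨j, hj, y, _, rfl⟩ := jProd_succ_subset hx
  exact (ringJacobson R).mul_mem_right j y hj

lemma jSpan_succ_le (k : ℕ) : jSpan R (k + 1) ≤ jSpan R k := by
  rw [jSpan, Submodule.span_le]
  intro x hx
  obtain ⟨j, _, y, hy, rfl⟩ := jProd_succ_subset hx
  exact Submodule.smul_mem _ j (Submodule.subset_span hy)

lemma jSpan_antitone : Antitone (jSpan R) :=
  antitone_nat_of_succ_le jSpan_succ_le

/-- Nakayama-style induction: a left ideal spanned by a finite set, contained in the span of
`J·K`, is zero. -/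
lemma nakayama_aux : ∀ (n : ℕ) (s : Finset R) (K : Submodule R R), s.card ≤ n →
    K = Submodule.span R (↑s : Set R) →
    (K ≤ Submodule.span R {y | ∃ j ∈ ringJacobson R, ∃ k ∈ K, y = j * k}) →
    K = ⊥ := by
  classical
  intro n
  induction n with
  | zero =>
    intro s K hcard hspan _
    rw [Finset.card_eq_zero.1 (Nat.le_zero.1 hcard)] at hspan
    simpa using hspan
  | succ n ih =>
    intro s K hcard hspan hJK
    rcases s.eq_empty_or_nonempty with rfl | ⟨g, hg⟩
    · simpa using hspan
    · have rep : ∀ x ∈ K, ∃ a : R → R, (∀ t, a t ∈ ringJacobson R) ∧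
          x = ∑ t ∈ s, a t * t := by
        intro x hx
        refine Submodule.span_induction
          (p := fun y _ => ∃ a : R → R, (∀ t, a t ∈ ringJacobson R) ∧ y = ∑ t ∈ s, a t * t)
          ?_ ?_ ?_ ?_ (hJK hx)
        · rintro y ⟨j, hj, k, hk, rfl⟩
          rw [hspan] at hk
          obtain ⟨c, -, hc⟩ := Submodule.mem_span_finset.1 hk
          refine ⟨fun t => j * c t, fun t => (ringJacobson R).mul_mem_right j (c t) hj, ?_⟩
          rw [← hc, Finset.mul_sum]
          exact Finset.sum_congr rfl fun t _ => by rw [smul_eq_mul, mul_assoc]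
        · exact ⟨fun _ => 0, fun _ => TwoSidedIdeal.zero_mem _, by simp⟩
        · rintro y z _ _ ⟨a, ha, rfl⟩ ⟨b, hb, rfl⟩
          refine ⟨fun t => a t + b t, fun t => TwoSidedIdeal.add_mem _ (ha t) (hb t), ?_⟩
          rw [← Finset.sum_add_distrib]
          exact Finset.sum_congr rfl fun t _ => (add_mul _ _ _).symm
        · rintro r y _ ⟨a, ha, rfl⟩
          refine ⟨fun t => r * a t, fun t => (ringJacobson R).mul_mem_left r (a t) (ha t), ?_⟩
          rw [smul_eq_mul, Finset.mul_sum]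
          exact Finset.sum_congr rfl fun t _ => (mul_assoc _ _ _).symm
      obtain ⟨a, ha, hg_eq⟩ := rep g (hspan ▸ Submodule.subset_span (Finset.mem_coe.2 hg))
      have hsum : g = a g * g + ∑ t ∈ s.erase g, a t * t :=
        hg_eq.trans (Finset.add_sum_erase s (fun t => a t * t) hg).symm
      have hunit : IsUnit (1 - a g) := by
        have := isUnit_one_add_of_mem_ringJacobson (TwoSidedIdeal.neg_mem _ (ha g))
        simpa [sub_eq_add_neg] using this
      have hgmem : g ∈ Submodule.span R (↑(s.erase g) : Set R) := by
        obtain ⟨u, hu⟩ := hunit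
        have h2 : g - a g * g = ∑ t ∈ s.erase g, a t * t := sub_eq_of_eq_add' hsum
        have h1 : (1 - a g) * g = ∑ t ∈ s.erase g, a t * t := by
          rw [sub_mul, one_mul]; exact h2
        have hgu : g = ↑u⁻¹ * ∑ t ∈ s.erase g, a t * t := by
          rw [← h1, ← mul_assoc, ← hu, u.inv_mul, one_mul]
        have hmem2 : ↑u⁻¹ * ∑ t ∈ s.erase g, a t * t ∈
            Submodule.span R (↑(s.erase g) : Set R) :=
          Submodule.smul_mem _ _ (Submodule.sum_mem _ fun t ht =>
            Submodule.smul_mem _ _ (Submodule.subset_span (Finset.mem_coe.2 ht)))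
        rwa [← hgu] at hmem2
      have hK' : K = Submodule.span R (↑(s.erase g) : Set R) := by
        apply le_antisymm
        · rw [hspan, Submodule.span_le]
          intro x hx
          rcases eq_or_ne x g with rfl | hne
          · exact hgmem
          · exact Submodule.subset_span
              (Finset.mem_coe.2 (Finset.mem_erase.2 ⟨hne, Finset.mem_coe.1 hx⟩))
        · rw [hspan]
          exact Submodule.span_mono fun x hx =>
            Finset.mem_coe.2 (Finset.mem_of_mem_erase (Finset.mem_coe.1 hx))
      refine ih (s.erase g) K ?_ hK' hJK
      have := Finset.card_erase_of_mem hg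
      omega

end Aux

/-- If the unit graph of `R` has finite clique number and `2` is a unit of `R`,
then the Jacobson radical of `R` is nilpotent: there is an `n : ℕ` with `J(R)^n = 0`,
i.e. every product of `n` elements of `J(R)` vanishes. -/
theorem jacobson_nilpotent_of_ecliqueNum_lt_top (R : Type*) [Ring R]
    (hclique : ecliqueNum (unitGraph R) ≠ ⊤) (h2 : IsUnit (2 : R)) :
    ∃ n : ℕ, ∀ f : Fin n → R, (∀ i, f i ∈ ringJacobson R) → (List.ofFn f).prod = 0 := by
  classical
  -- Step 1: `1 + J` is a clique, hence `J` is finite.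
  set S : Set R := (fun j => 1 + j) '' (ringJacobson R : Set R) with hS
  have hclq : (unitGraph R).IsClique S := by
    rintro _ ⟨x, hx, rfl⟩ _ ⟨y, hy, rfl⟩ hne
    change _ ≠ _ ∧ IsUnit _
    refine ⟨hne, ?_⟩
    have hxy : x + y ∈ ringJacobson R := TwoSidedIdeal.add_mem _ hx hy
    obtain ⟨v, hv⟩ := h2.exists_right_inv
    have key2 : (2 : R) * (1 + v * (x + y)) = 2 + (x + y) := by
      rw [mul_add, mul_one, ← mul_assoc, hv, one_mul]
    have key : (1 + x) + (1 + y) = 2 * (1 + v * (x + y)) := by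
      rw [key2, ← one_add_one_eq_two]
      abel
    rw [key]
    exact h2.mul (isUnit_one_add_of_mem_ringJacobson
      ((ringJacobson R).mul_mem_left _ _ hxy))
  have hSle : S.encard ≤ ecliqueNum (unitGraph R) :=
    le_iSup₂ (f := fun (s : Set R) (_ : s ∈ {s : Set R | (unitGraph R).IsClique s}) => s.encard)
      S hclq
  have hSfin : S.Finite := by
    refine Set.encard_ne_top_iff.1 fun h => hclique (top_unique ?_)
    rw [← h]; exact hSle
  have hJfin : (ringJacobson R : Set R).Finite := by
    refine Set.Finite.of_finite_image (f := fun j => 1 + j) (hS ▸ hSfin) ?_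
    intro a _ b _ h
    exact add_left_cancel h
  -- Step 2: the descending chain of spans of products stabilizes.
  have hsub : ∀ k : ℕ, ((jSpan R (k + 1) : Submodule R R) : Set R) ⊆
      (ringJacobson R : Set R) := by
    intro k x hx
    have hle : jSpan R (k + 1) ≤ (ringJacobson R).asIdeal :=
      Submodule.span_le.2 fun y hy =>
        (TwoSidedIdeal.mem_asIdeal).2 (jProd_succ_subset_jacobson hy)
    exact (TwoSidedIdeal.mem_asIdeal).1 (hle hx)
  have hfinsub : Finite {t : Set R // t ⊆ (ringJacobson R : Set R)} := by
    have := hJfin.finite_subsets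
    exact this.to_subtype
  obtain ⟨a, b, hab, heq⟩ := Finite.exists_ne_map_eq_of_infinite
    (fun k : ℕ => (⟨(jSpan R (k + 1) : Set R), hsub k⟩ :
      {t : Set R // t ⊆ (ringJacobson R : Set R)}))
  have heq' : jSpan R (a + 1) = jSpan R (b + 1) :=
    SetLike.ext' (congrArg Subtype.val heq)
  have hstab' : ∃ n, 1 ≤ n ∧ jSpan R n = jSpan R (n + 1) := by
    rcases hab.lt_or_gt with hlt | hlt
    · exact ⟨a + 1, le_add_self, le_antisymm
        (by rw [heq']; exact jSpan_antitone (by omega)) (jSpan_succ_le _)⟩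
    · exact ⟨b + 1, le_add_self, le_antisymm
        (by rw [← heq']; exact jSpan_antitone (by omega)) (jSpan_succ_le _)⟩
  obtain ⟨n, hn1, hstab⟩ := hstab'
  obtain ⟨k, rfl⟩ : ∃ k, n = k + 1 := ⟨n - 1, by omega⟩
  -- Step 3: Nakayama.
  have hPfin : (jProd R (k + 1)).Finite :=
    hJfin.subset fun x hx => jProd_succ_subset_jacobson hx
  have hKspan : jSpan R (k + 1) = Submodule.span R (↑hPfin.toFinset : Set R) := by
    rw [Set.Finite.coe_toFinset]; rfl
  have hJK : jSpan R (k + 1) ≤ Submodule.span R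
      {y | ∃ j ∈ ringJacobson R, ∃ z ∈ jSpan R (k + 1), y = j * z} := by
    refine hstab.le.trans ?_
    show Submodule.span R (jProd R (k + 1 + 1)) ≤ _
    rw [Submodule.span_le]
    intro x hx
    obtain ⟨j, hj, y, hy, rfl⟩ := jProd_succ_subset hx
    exact Submodule.subset_span ⟨j, hj, y, Submodule.subset_span hy, rfl⟩
  have hKbot : jSpan R (k + 1) = ⊥ :=
    nakayama_aux hPfin.toFinset.card hPfin.toFinset (jSpan R (k + 1)) le_rfl hKspan hJK
  refine ⟨k + 1, fun f hf => ?_⟩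
  have hmem : (List.ofFn f).prod ∈ jSpan R (k + 1) :=
    Submodule.subset_span ⟨f, hf, rfl⟩
  rw [hKbot] at hmem
  simpa using hmem
end

section
/- Let R be a ring such that 2 is not a unit of R. Then the unit graph G(R) is bipartite if and only if the unit graph G(R/J(R)) is bipartite. -/
section Aux

variable {R : Type*} [Ring R]

/-- In the Jacobson radical, every `1 - z` has a left inverse. -/
lemma aux_left_inv {z : R} (hz : z ∈ ringJacobson R) : ∃ v : R, v * (1 - z) = 1 := by
  rw [ringJacobson, TwoSidedIdeal.mem_jacobson_iff] at hz
  obtain ⟨v, hv⟩ := hz (-1)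
  rw [TwoSidedIdeal.mem_bot] at hv
  refine ⟨v, ?_⟩
  have : v * (1 - z) - 1 = v * (-1) * z + v - 1 := by noncomm_ring
  rw [sub_eq_zero.symm.trans (by rw [this, hv])]

/-- Elements of the Jacobson radical give units `1 - z`. -/
lemma aux_isUnit_one_sub {z : R} (hz : z ∈ ringJacobson R) : IsUnit (1 - z) := by
  obtain ⟨v, hv⟩ := aux_left_inv hz
  have hvz : v * z ∈ ringJacobson R := (ringJacobson R).mul_mem_left _ _ hz
  have hveq : v = 1 - (-(v * z)) := by
    have : v - v * z = 1 := by rw [← hv]; noncomm_ring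
    rw [sub_neg_eq_add, ← this]; noncomm_ring
  obtain ⟨u, hu⟩ := aux_left_inv ((ringJacobson R).neg_mem hvz)
  rw [← hveq] at hu
  have huv : (1 - z) = u := by
    calc (1 - z) = (u * v) * (1 - z) := by rw [hu, one_mul]
    _ = u * (v * (1 - z)) := by simp only [mul_assoc]
    _ = u := by rw [hv, mul_one]
  exact ⟨⟨1 - z, v, by rw [huv, hu], hv⟩, rfl⟩

/-- Units lift along the quotient by the Jacobson radical. -/
lemma aux_isUnit_of_map {x : R}
    (h : IsUnit ((ringJacobson R).ringCon.mk' x)) : IsUnit x := by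
  obtain ⟨u, hu⟩ := h
  obtain ⟨y, hy⟩ := Quotient.mk''_surjective (↑u⁻¹ : modJacobson R)
  have hy' : (ringJacobson R).ringCon.mk' y = ↑u⁻¹ := hy
  have h1 : (ringJacobson R).ringCon.mk' (x * y) = (ringJacobson R).ringCon.mk' 1 := by
    rw [map_mul, map_one, hy', ← hu, Units.mul_inv]
  have h2 : (ringJacobson R).ringCon.mk' (y * x) = (ringJacobson R).ringCon.mk' 1 := by
    rw [map_mul, map_one, hy', ← hu, Units.inv_mul]
  have m1 : x * y - 1 ∈ ringJacobson R := by
    rw [← TwoSidedIdeal.rel_iff]; exact ((ringJacobson R).ringCon.eq).mp h1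
  have m2 : y * x - 1 ∈ ringJacobson R := by
    rw [← TwoSidedIdeal.rel_iff]; exact ((ringJacobson R).ringCon.eq).mp h2
  have u1 : IsUnit (x * y) := by
    have := aux_isUnit_one_sub ((ringJacobson R).neg_mem m1)
    simpa using this
  have u2 : IsUnit (y * x) := by
    have := aux_isUnit_one_sub ((ringJacobson R).neg_mem m2)
    simpa using this
  obtain ⟨a, ha⟩ := u1
  obtain ⟨b, hb⟩ := u2
  have hr : x * (y * ↑a⁻¹) = 1 := by
    rw [← mul_assoc, ← ha, Units.mul_inv]
  have hl : (↑b⁻¹ * y) * x = 1 := by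
    rw [mul_assoc, ← hb, Units.inv_mul]
  have heq : (↑b⁻¹ * y : R) = y * ↑a⁻¹ := by
    calc (↑b⁻¹ * y : R) = (↑b⁻¹ * y) * (x * (y * ↑a⁻¹)) := by rw [hr, mul_one]
    _ = ((↑b⁻¹ * y) * x) * (y * ↑a⁻¹) := by simp only [mul_assoc]
    _ = y * ↑a⁻¹ := by rw [hl, one_mul]
  exact ⟨⟨x, y * ↑a⁻¹, hr, heq ▸ hl⟩, rfl⟩

/-- If `2 * t` is a unit (2 central), then `2` is a unit. -/
lemma aux_two_unit {S : Type*} [Ring S] {t : S} (h : IsUnit (2 * t)) : IsUnit (2 : S) := by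
  obtain ⟨u, hu⟩ := h
  have hr : (2 : S) * (t * ↑u⁻¹) = 1 := by
    rw [← mul_assoc, ← hu, Units.mul_inv]
  have hl : (t * ↑u⁻¹) * 2 = 1 := by
    rw [mul_two, ← two_mul, hr]
  exact ⟨⟨2, t * ↑u⁻¹, hr, hl⟩, rfl⟩

end Aux

/-- If `2` is not a unit of `R`, then the unit graph `G(R)` is bipartite iff the unit
graph of `R/J(R)` is bipartite. -/
theorem unitGraph_bipartite_iff_modJacobson (R : Type*) [Ring R]
    (h2 : ¬ IsUnit (2 : R)) :
    (unitGraph R).Colorable 2 ↔ (unitGraph (modJacobson R)).Colorable 2 := by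
  set π := (ringJacobson R).ringCon.mk' with hπ
  have hsurj : Function.Surjective π := Quotient.mk''_surjective
  constructor
  · rintro ⟨C⟩
    refine ⟨SimpleGraph.Coloring.mk (fun x => C (Function.surjInv hsurj x)) ?_⟩
    rintro x y ⟨hxy, hu⟩
    set a := Function.surjInv hsurj x with ha
    set b := Function.surjInv hsurj y with hb
    have hax : π a = x := Function.surjInv_eq hsurj x
    have hby : π b = y := Function.surjInv_eq hsurj y
    have hab : a ≠ b := fun h => hxy (by rw [← hax, ← hby, h])
    have hab2 : IsUnit (a + b) := by
      apply aux_isUnit_of_map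
      rw [← hπ, map_add, hax, hby]; exact hu
    exact C.valid ⟨hab, hab2⟩
  · rintro ⟨C⟩
    refine ⟨SimpleGraph.Coloring.mk (fun a => C (π a)) ?_⟩
    rintro a b ⟨hab, hu⟩
    have hπu : IsUnit (π a + π b) := by rw [← map_add]; exact hu.map π
    have hπab : π a ≠ π b := by
      intro h
      apply h2
      apply aux_isUnit_of_map
      have : π (2 : R) = (2 : modJacobson R) := by rw [map_ofNat]
      rw [this]
      apply aux_two_unit (t := π b)
      have : π a + π b = 2 * π b := by rw [h, two_mul]
      rwa [this] at hπu
    exact C.valid ⟨hπab, hπu⟩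
end
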